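/- Let (𝔫, ⟨·,·⟩) be a metric Lie algebra with 𝔫 nilpotent, satisfying the GO condition, and suppose the restriction of ⟨·,·⟩ to [𝔫,𝔫] is nondegenerate; let 𝔳 = [𝔫,𝔫]^⊥. Then for every X ∈ [𝔫,𝔫] and Y ∈ 𝔳 with ⟨X+Y, X+Y⟩ ≠ 0, there exists a skew-symmetric derivation A of (𝔫, ⟨·,·⟩) such that A(X) = [X,Y] (equivalently A(X) + [Y,X] = 0) and ⟨A(Y), Y'⟩ = ⟨[Y,Y'], X⟩ for all Y' ∈ 𝔳. -/

import Mathlib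

/-- `D` is a skew-symmetric derivation of the metric Lie algebra `(𝔫, B)`. -/
def IsSkewDeriv {n : Type*} [LieRing n] [LieAlgebra ℝ n]
    (B : LinearMap.BilinForm ℝ n) (D : n →ₗ[ℝ] n) : Prop :=
  (∀ X Y : n, D ⁅X, Y⁆ = ⁅D X, Y⁆ + ⁅X, D Y⁆) ∧
  (∀ X Y : n, B (D X) Y + B X (D Y) = 0)

/-- The GO condition for a metric Lie algebra `(𝔫, B)`: for every `T` there are a
skew-symmetric derivation `A` and `k ∈ ℝ` with `⟨[T,T'] + A(T'), T⟩ = k⟨T,T'⟩` for all `T'`. -/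
def IsGO {n : Type*} [LieRing n] [LieAlgebra ℝ n] (B : LinearMap.BilinForm ℝ n) : Prop :=
  ∀ T : n, ∃ (A : n →ₗ[ℝ] n) (k : ℝ), IsSkewDeriv B A ∧
    ∀ T' : n, B (⁅T, T'⁆ + A T') T = k * B T T'

/-- A symmetric bilinear form is Lorentz: there is an orthogonal basis in which exactly one
basis vector has negative norm-square and all others have positive norm-square. -/
def IsLorentz {V : Type*} [AddCommGroup V] [Module ℝ V] (B : LinearMap.BilinForm ℝ V) : Prop :=
  ∃ (m : ℕ) (b : Module.Basis (Fin (m + 1)) ℝ V) (i₀ : Fin (m + 1)),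
    (∀ i j, i ≠ j → B (b i) (b j) = 0) ∧ B (b i₀) (b i₀) < 0 ∧
    ∀ i, i ≠ i₀ → 0 < B (b i) (b i)

/-- The derived algebra `[𝔫,𝔫]`, as a submodule of `𝔫`. -/
def derived (n : Type*) [LieRing n] [LieAlgebra ℝ n] : Submodule ℝ n :=
  Submodule.span ℝ {z : n | ∃ X Y : n, ⁅X, Y⁆ = z}

section Aux

variable {n : Type*} [LieRing n] [LieAlgebra ℝ n]

theorem bracket_mem_derived (u v : n) : ⁅u, v⁆ ∈ derived n :=
  Submodule.subset_span ⟨u, v, rfl⟩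

theorem deriv_mem_derived {D : n →ₗ[ℝ] n}
    (hD : ∀ X Y : n, D ⁅X, Y⁆ = ⁅D X, Y⁆ + ⁅X, D Y⁆) :
    ∀ z ∈ derived n, D z ∈ derived n := by
  intro z hz
  induction hz using Submodule.span_induction with
  | mem x hx =>
      obtain ⟨u, v, rfl⟩ := hx
      rw [hD]
      exact Submodule.add_mem _ (bracket_mem_derived _ _) (bracket_mem_derived _ _)
  | zero => simp
  | add x y _ _ hx hy => rw [map_add]; exact Submodule.add_mem _ hx hy
  | smul c x _ hx => rw [map_smul]; exact Submodule.smul_mem _ _ hx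

variable (B : LinearMap.BilinForm ℝ n)

/-- `⟨[c,y], c⟩ = 0` for `c` in the derived algebra and `y ⟂ derived`. -/
theorem star0 (hsymm : ∀ X Y : n, B X Y = B Y X) (hGO : IsGO B)
    {c y : n} (hc : c ∈ derived n) (hy : ∀ X' ∈ derived n, B y X' = 0) :
    B ⁅c, y⁆ c = 0 := by
  obtain ⟨A, k, ⟨hder, hskew⟩, hrel⟩ := hGO c
  have h1 := hrel y
  have h2 : B y (A c) = 0 := hy _ (deriv_mem_derived hder c hc)
  have h3 : B (A y) c = 0 := by have := hskew y c; linarith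
  have h5 : B c y = 0 := by rw [hsymm]; exact hy c hc
  simp only [map_add, LinearMap.add_apply] at h1
  rw [h5, mul_zero] at h1
  linarith

theorem starr (hsymm : ∀ X Y : n, B X Y = B Y X) (hGO : IsGO B)
    {a b y : n} (ha : a ∈ derived n) (hb : b ∈ derived n)
    (hy : ∀ X' ∈ derived n, B y X' = 0) :
    B ⁅a, y⁆ b + B ⁅b, y⁆ a = 0 := by
  have h := star0 B hsymm hGO (Submodule.add_mem _ ha hb) hy
  rw [add_lie] at h
  simp only [map_add, LinearMap.add_apply] at h
  have h1 := star0 B hsymm hGO ha hy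
  have h2 := star0 B hsymm hGO hb hy
  linarith

/-- The set of `w` such that `ad_w` restricted to the derived algebra is skew. -/
def goodSet : Submodule ℝ n where
  carrier := {w : n | ∀ a ∈ derived n, ∀ b ∈ derived n, B ⁅w, a⁆ b + B ⁅w, b⁆ a = 0}
  add_mem' := by
    intro u v hu hv
    intro a ha b hb
    have h1 := hu a ha b hb
    have h2 := hv a ha b hb
    simp only [add_lie, map_add, LinearMap.add_apply]
    linarith
  zero_mem' := by intro a ha b hb; simp
  smul_mem' := by
    intro c u hu
    intro a ha b hb
    have h1 := hu a ha b hb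
    simp only [smul_lie, map_smul, LinearMap.smul_apply, smul_eq_mul]
    linear_combination c * h1

theorem good_lie (hsymm : ∀ X Y : n, B X Y = B Y X) {u v : n}
    (hu : u ∈ goodSet B) (hv : v ∈ goodSet B) : ⁅u, v⁆ ∈ goodSet B := by
  intro a ha b hb
  have hva : ⁅v, a⁆ ∈ derived n := bracket_mem_derived _ _
  have hvb : ⁅v, b⁆ ∈ derived n := bracket_mem_derived _ _
  have hua : ⁅u, a⁆ ∈ derived n := bracket_mem_derived _ _
  have hub : ⁅u, b⁆ ∈ derived n := bracket_mem_derived _ _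
  have e1 := hu ⁅v, a⁆ hva b hb
  have e2 := hv ⁅u, a⁆ hua b hb
  have e3 := hu ⁅v, b⁆ hvb a ha
  have e4 := hv ⁅u, b⁆ hub a ha
  have s1 : B ⁅u, b⁆ ⁅v, a⁆ = B ⁅v, a⁆ ⁅u, b⁆ := hsymm _ _
  have s2 : B ⁅v, b⁆ ⁅u, a⁆ = B ⁅u, a⁆ ⁅v, b⁆ := hsymm _ _
  rw [lie_lie u v a, lie_lie u v b]
  simp only [map_sub, LinearMap.sub_apply]
  linarith

theorem vset_mem_good (hsymm : ∀ X Y : n, B X Y = B Y X) (hGO : IsGO B)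
    {y : n} (hy : ∀ X' ∈ derived n, B y X' = 0) : y ∈ goodSet B := by
  intro a ha b hb
  have h := starr B hsymm hGO ha hb hy
  have e1 : ⁅y, a⁆ = -⁅a, y⁆ := by rw [← lie_skew a y, neg_neg]
  have e2 : ⁅y, b⁆ = -⁅b, y⁆ := by rw [← lie_skew b y, neg_neg]
  rw [e1, e2]
  simp only [map_neg, LinearMap.neg_apply]
  linarith

end Aux

section Gen

variable {n : Type*} [LieRing n] [LieAlgebra ℝ n] [FiniteDimensional ℝ n]
variable (B : LinearMap.BilinForm ℝ n)

/-- Orthogonal decomposition of any vector with respect to the derived algebra. -/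
theorem exists_decomp
    (hnondeg' : ∀ X ∈ derived n, (∀ Y ∈ derived n, B X Y = 0) → X = 0) (w : n) :
    ∃ d ∈ derived n, ∀ X' ∈ derived n, B (w - d) X' = 0 := by
  set W := derived n with hW
  have hres : (B.restrict W).Nondegenerate := by
    refine LinearMap.BilinForm.Nondegenerate.ofSeparatingLeft fun x hx => ?_
    have hx0 : x.1 = 0 := by
      refine hnondeg' x.1 x.2 ?_
      intro y hy
      exact hx ⟨y, hy⟩
    exact Subtype.ext hx0
  let f : Module.Dual ℝ W := (B w).domRestrict W
  let d : W := ((B.restrict W).toDual hres).symm f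
  refine ⟨d.1, d.2, ?_⟩
  intro X' hX'
  have hd : B.restrict W d ⟨X', hX'⟩ = f ⟨X', hX'⟩ :=
    LinearMap.BilinForm.apply_toDual_symm_apply (hB := hres) ..
  have hd' : B d.1 X' = B w X' := hd
  simp only [map_sub, LinearMap.sub_apply]
  rw [hd']
  ring

theorem derived_le_lcs1 : derived n ≤ (LieModule.lowerCentralSeries ℝ n n 1 : LieSubmodule ℝ n n) := by
  rw [derived]
  refine Submodule.span_le.2 ?_
  rintro z ⟨u, v, rfl⟩
  have : ⁅u, v⁆ ∈ LieModule.lowerCentralSeries ℝ n n 1 := by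
    rw [LieModule.lowerCentralSeries_succ]
    exact LieSubmodule.lie_mem_lie (LieSubmodule.mem_top u) (LieSubmodule.mem_top v)
  exact this

theorem top_le_good [LieRing.IsNilpotent n]
    (hsymm : ∀ X Y : n, B X Y = B Y X) (hGO : IsGO B)
    (hnondeg' : ∀ X ∈ derived n, (∀ Y ∈ derived n, B X Y = 0) → X = 0)
    (w : n) : w ∈ goodSet B := by
  set S := goodSet B with hS
  have key : ∀ j : ℕ, ∀ x : n,
      x ∈ S ⊔ ((LieModule.lowerCentralSeries ℝ n n (j + 1)) : Submodule ℝ n) := by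
    intro j
    induction j with
    | zero =>
        intro x
        obtain ⟨d, hd, hrest⟩ := exists_decomp B hnondeg' x
        have h1 : x - d ∈ S := vset_mem_good B hsymm hGO hrest
        have h2 : d ∈ ((LieModule.lowerCentralSeries ℝ n n 1) : Submodule ℝ n) := derived_le_lcs1 hd
        have : x = (x - d) + d := by abel
        rw [this]
        exact Submodule.add_mem _ (Submodule.mem_sup_left h1) (Submodule.mem_sup_right h2)
    | succ j IH =>
        have hsub : ((LieModule.lowerCentralSeries ℝ n n (j + 1)) : Submodule ℝ n) ≤
            S ⊔ ((LieModule.lowerCentralSeries ℝ n n (j + 2)) : Submodule ℝ n) := by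
          have hspan : ((LieModule.lowerCentralSeries ℝ n n (j + 1)) : Submodule ℝ n) =
              Submodule.span ℝ {m : n | ∃ x ∈ (⊤ : LieIdeal ℝ n),
                ∃ z ∈ LieModule.lowerCentralSeries ℝ n n j, ⁅x, z⁆ = m} := by
            rw [LieModule.lowerCentralSeries_succ]
            exact LieSubmodule.lieIdeal_oper_eq_linear_span' (R := ℝ) (L := n) (M := n)
              (I := ⊤) (N := LieModule.lowerCentralSeries ℝ n n j)
          rw [hspan]
          refine Submodule.span_le.2 ?_
          rintro m ⟨x, -, z, hz, rfl⟩
          obtain ⟨s₁, hs₁, c₁, hc₁, rfl⟩ := Submodule.mem_sup.1 (IH x)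
          obtain ⟨s₂, hs₂, c₂, hc₂, rfl⟩ := Submodule.mem_sup.1 (IH z)
          have hc₁' : c₁ ∈ LieModule.lowerCentralSeries ℝ n n (j + 1) := hc₁
          have hc₂' : c₂ ∈ LieModule.lowerCentralSeries ℝ n n (j + 1) := hc₂
          have hss : ⁅s₁, s₂⁆ ∈ S := good_lie B hsymm hs₁ hs₂
          have hmem : ∀ y : n, ∀ c : n, c ∈ LieModule.lowerCentralSeries ℝ n n (j + 1) →
              ⁅y, c⁆ ∈ LieModule.lowerCentralSeries ℝ n n (j + 2) := by
            intro y c hc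
            rw [LieModule.lowerCentralSeries_succ]
            exact LieSubmodule.lie_mem_lie (LieSubmodule.mem_top y) hc
          have h1 : ⁅s₁, c₂⁆ ∈ LieModule.lowerCentralSeries ℝ n n (j + 2) := hmem _ _ hc₂'
          have h2 : ⁅c₁, s₂⁆ ∈ LieModule.lowerCentralSeries ℝ n n (j + 2) := by
            have := hmem s₂ c₁ hc₁'
            have e : ⁅c₁, s₂⁆ = -⁅s₂, c₁⁆ := by rw [← lie_skew s₂ c₁, neg_neg]
            rw [e]
            exact neg_mem this
          have h3 : ⁅c₁, c₂⁆ ∈ LieModule.lowerCentralSeries ℝ n n (j + 2) := hmem _ _ hc₂'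
          have expand : ⁅s₁ + c₁, s₂ + c₂⁆ =
              ⁅s₁, s₂⁆ + (⁅s₁, c₂⁆ + (⁅c₁, s₂⁆ + ⁅c₁, c₂⁆)) := by
            rw [add_lie, lie_add, lie_add]
            abel
          rw [expand]
          refine Submodule.add_mem _ (Submodule.mem_sup_left hss) ?_
          refine Submodule.mem_sup_right ?_
          exact Submodule.add_mem _ h1 (Submodule.add_mem _ h2 h3)
        intro x
        obtain ⟨s, hs, c, hc, rfl⟩ := Submodule.mem_sup.1 (IH x)
        exact Submodule.add_mem _ (Submodule.mem_sup_left hs)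
          (hsub hc)
  obtain ⟨k₀, hk₀⟩ :=
    (LieModule.isNilpotent_iff (R := ℝ) (L := n) (M := n)).1 inferInstance
  have hbot : LieModule.lowerCentralSeries ℝ n n (k₀ + 1) = ⊥ := by
    rw [LieModule.lowerCentralSeries_succ, hk₀]
    exact LieSubmodule.lie_bot _
  have := key k₀ w
  rw [hbot] at this
  simpa using this

end Gen

/-- existence of the derivation `A` in equations (4)-(5) of the paper. -/
theorem stmt8 {n : Type*} [LieRing n] [LieAlgebra ℝ n] [FiniteDimensional ℝ n]
    [LieRing.IsNilpotent n] (B : LinearMap.BilinForm ℝ n)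
    (hsymm : ∀ X Y : n, B X Y = B Y X)
    (hnondeg : ∀ X : n, (∀ Y : n, B X Y = 0) → X = 0)
    (hGO : IsGO B)
    (hnondeg' : ∀ X ∈ derived n, (∀ Y ∈ derived n, B X Y = 0) → X = 0) :
    ∀ X ∈ derived n, ∀ Y ∈ {Y : n | ∀ X' ∈ derived n, B Y X' = 0},
      B (X + Y) (X + Y) ≠ 0 →
      ∃ A : n →ₗ[ℝ] n, IsSkewDeriv B A ∧ A X = ⁅X, Y⁆ ∧
        ∀ Y' ∈ {Y' : n | ∀ X' ∈ derived n, B Y' X' = 0}, B (A Y) Y' = B ⁅Y, Y'⁆ X := by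
  intro X hX Y hY hTT
  -- the key identity: ad_w is skew on the derived algebra, for every w
  have keyid : ∀ w : n, ∀ a ∈ derived n, ∀ b ∈ derived n,
      B ⁅w, a⁆ b + B ⁅w, b⁆ a = 0 := fun w => top_le_good B hsymm hGO hnondeg' w
  -- c-identity
  have cid : ∀ b ∈ derived n, B ⁅X, b⁆ X = 0 := by
    intro b hb
    have := keyid X b hb X hX
    simpa using this
  obtain ⟨A, k, ⟨hder, hskew⟩, hrel⟩ := hGO (X + Y)
  have hk : k = 0 := by
    have h := hrel (X + Y)
    rw [lie_self, zero_add] at h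
    have h2 : B (A (X + Y)) (X + Y) = 0 := by
      have := hskew (X + Y) (X + Y)
      have hs := hsymm (X + Y) (A (X + Y))
      linarith
    rw [h2] at h
    exact (mul_eq_zero.1 h.symm).resolve_right hTT
  have hAX : A X ∈ derived n := deriv_mem_derived hder X hX
  have hAder : ∀ z ∈ derived n, A z ∈ derived n := deriv_mem_derived hder
  refine ⟨A, ⟨hder, hskew⟩, ?_, ?_⟩
  · -- A X = ⁅X, Y⁆
    have hXY : ⁅X, Y⁆ ∈ derived n := bracket_mem_derived _ _
    have hsub : A X - ⁅X, Y⁆ = 0 := by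
      refine hnondeg' _ (Submodule.sub_mem _ hAX hXY) ?_
      intro b hb
      have hrb := hrel b
      rw [hk, zero_mul] at hrb
      rw [add_lie] at hrb
      simp only [map_add, LinearMap.add_apply] at hrb
      -- hrb : B ⁅X,b⁆ X + B ⁅X,b⁆ Y + (B ⁅Y,b⁆ X + B ⁅Y,b⁆ Y) + (B (A b) X + B (A b) Y) = 0
      have t1 : B ⁅X, b⁆ X = 0 := cid b hb
      have t2 : B ⁅X, b⁆ Y = 0 := by rw [hsymm]; exact hY _ (bracket_mem_derived _ _)
      have t3 : B ⁅Y, b⁆ Y = 0 := by rw [hsymm]; exact hY _ (bracket_mem_derived _ _)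
      have t4 : B (A b) Y = 0 := by rw [hsymm]; exact hY _ (hAder b hb)
      have t5 : B (A b) X = - B (A X) b := by
        have h1 := hskew b X
        have h2 := hsymm b (A X)
        linarith
      have hAXb : B (A X) b = B ⁅Y, b⁆ X := by linarith
      -- starr : B ⁅X,Y⁆ b + B ⁅b,Y⁆ X = 0
      have hst := starr B hsymm hGO hX hb hY
      have e : ⁅Y, b⁆ = -⁅b, Y⁆ := by rw [← lie_skew b Y, neg_neg]
      rw [e] at hAXb
      simp only [map_neg, LinearMap.neg_apply] at hAXb
      simp only [map_sub, LinearMap.sub_apply]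
      linarith
    exact sub_eq_zero.1 hsub
  · -- the 𝔳-condition
    intro Y' hY'
    have hrY := hrel Y'
    rw [hk, zero_mul] at hrY
    rw [add_lie] at hrY
    simp only [map_add, LinearMap.add_apply] at hrY
    have t1 : B ⁅X, Y'⁆ X = 0 := star0 B hsymm hGO hX hY'
    have t2 : B ⁅X, Y'⁆ Y = 0 := by rw [hsymm]; exact hY _ (bracket_mem_derived _ _)
    have t3 : B ⁅Y, Y'⁆ Y = 0 := by rw [hsymm]; exact hY _ (bracket_mem_derived _ _)
    have t4 : B (A Y') X = 0 := by
      have h1 := hskew Y' X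
      have h2 : B Y' (A X) = 0 := hY' _ hAX
      linarith
    have t5 : B (A Y') Y = - B (A Y) Y' := by
      have h1 := hskew Y' Y
      have h2 := hsymm Y' (A Y)
      linarith
    linarith
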